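/- arXiv:1201.1774 — 2 statements merged into one kernel-verified Lean document; each statement's English description precedes it below -/
import Mathlib

section
/- Let N ≥ 1, 1 < q < 2, a = (2-q)/(q-1), γ_q = (q-1)^{-a}/(2-q), and η ≥ 0. Then the radial function F(x) = γ_q(|x|-η)^{-a} satisfies -ΔF + |∇F|^q = γ_q · a · (N-1)/|x| · (|x|-η)^{-(a+1)} ≥ 0 at every x ∈ ℝ^N with |x| > η; in particular F is a stationary supersolution of u_t - Δu + |∇u|^q = 0 on {|x| > η}. -/
open Real Set

lemma normFDeriv {E : Type*} [NormedAddCommGroup E] [InnerProductSpace ℝ E]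
    {y : E} (hy : y ≠ 0) :
    HasFDerivAt (fun z : E => ‖z‖) (‖y‖⁻¹ • innerSL ℝ y) y := by
  have hy' : (0:ℝ) < ‖y‖ := norm_pos_iff.mpr hy
  have h1 : HasFDerivAt (fun z : E => ‖z‖ ^ 2) ((2:ℕ) • innerSL ℝ y) y :=
    (hasStrictFDerivAt_norm_sq y).hasFDerivAt
  have h2 : HasDerivAt Real.sqrt (1 / (2 * Real.sqrt (‖y‖^2))) (‖y‖^2) :=
    Real.hasDerivAt_sqrt (by positivity)
  have h3 := h2.comp_hasFDerivAt y h1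
  rw [show (Real.sqrt ∘ fun z : E => ‖z‖^2) = fun z : E => ‖z‖ by
    funext z; simp [Real.sqrt_sq (norm_nonneg z)]] at h3
  refine h3.congr_fderiv ?_
  rw [Real.sqrt_sq hy'.le]
  ext v
  simp [smul_smul]
  field_simp

lemma shiftRpowDeriv {η r : ℝ} (hs : 0 < r - η) (c p : ℝ) :
    HasDerivAt (fun t : ℝ => c * (t - η) ^ p) (c * p * (r - η) ^ (p - 1)) r := by
  have hsub : HasDerivAt (fun t : ℝ => t - η) 1 r := (hasDerivAt_id r).sub_const η
  have hrpow : HasDerivAt (fun u : ℝ => u ^ p) (p * (r - η) ^ (p - 1)) (r - η) :=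
    Real.hasDerivAt_rpow_const (Or.inl hs.ne')
  have := (hrpow.comp r hsub).const_mul c
  simpa [mul_assoc] using this

noncomputable def lap {N : ℕ} (f : EuclideanSpace ℝ (Fin N) → ℝ)
    (x : EuclideanSpace ℝ (Fin N)) : ℝ :=
  ∑ i : Fin N, fderiv ℝ (fun y => fderiv ℝ f y (EuclideanSpace.single i 1)) x
    (EuclideanSpace.single i 1)

set_option maxHeartbeats 1000000 in
/-- `F x = γ_q (‖x‖-η)^{-a}` satisfies
`-ΔF + |∇F|^q = γ_q a (N-1)/‖x‖ (‖x‖-η)^{-(a+1)} ≥ 0` on `{‖x‖ > η}`;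
in particular it is a stationary supersolution there. -/
theorem stmt1 (N : ℕ) (hN : 1 ≤ N) (q : ℝ) (hq1 : 1 < q) (hq2 : q < 2)
    (a γq η : ℝ) (ha : a = (2 - q) / (q - 1))
    (hγ : γq = (q - 1) ^ (-a) / (2 - q)) (hη : 0 ≤ η)
    (F : EuclideanSpace ℝ (Fin N) → ℝ) (hF : ∀ x, F x = γq * (‖x‖ - η) ^ (-a)) :
    ∀ x : EuclideanSpace ℝ (Fin N), η < ‖x‖ →
      -(lap F x) + ‖gradient F x‖ ^ q
          = γq * a * (((N : ℝ) - 1) / ‖x‖) * (‖x‖ - η) ^ (-(a + 1))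
        ∧ 0 ≤ -(lap F x) + ‖gradient F x‖ ^ q := by
  have hq1' : (0:ℝ) < q - 1 := by linarith
  have hq2' : (0:ℝ) < 2 - q := by linarith
  have ha0 : 0 < a := ha ▸ div_pos hq2' hq1'
  have hγ0 : 0 < γq := by rw [hγ]; exact div_pos (Real.rpow_pos_of_pos hq1' _) hq2'
  set P : ℝ := γq * a with hP
  have hP0 : 0 < P := mul_pos hγ0 ha0
  -- the coefficient function for the first derivative
  set K : ℝ → ℝ := fun ρ => -P * (ρ - η) ^ (-(a+1)) * ρ⁻¹ with hK
  -- first derivative of F on the region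
  have hFderiv : ∀ y : EuclideanSpace ℝ (Fin N), η < ‖y‖ →
      HasFDerivAt F ((K ‖y‖) • innerSL ℝ y) y := by
    intro y hy
    have hs : 0 < ‖y‖ - η := sub_pos.mpr hy
    have hy0 : y ≠ 0 := by
      intro h; rw [h, norm_zero] at hy; linarith
    have hφ := shiftRpowDeriv hs γq (-a)
    have hf := hφ.comp_hasFDerivAt y (normFDeriv hy0)
    rw [show ((fun t : ℝ => γq * (t - η) ^ (-a)) ∘ fun z : EuclideanSpace ℝ (Fin N) => ‖z‖) = F by
      funext z; simp [hF]] at hf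
    refine hf.congr_fderiv ?_
    rw [smul_smul, hK]
    congr 1
    rw [show -(a+1) = -a - 1 by ring]
    ring
  intro x hx
  have hr0 : (0:ℝ) < ‖x‖ := lt_of_le_of_lt hη hx
  have hx0 : x ≠ 0 := by intro h; rw [h, norm_zero] at hx; linarith
  have hs : 0 < ‖x‖ - η := sub_pos.mpr hx
  set r : ℝ := ‖x‖ with hr
  set A : ℝ := (r - η) ^ (-(a+1)) with hA
  set B : ℝ := (r - η) ^ (-(a+2)) with hB
  have hApos : 0 < A := Real.rpow_pos_of_pos hs _
  have hBpos : 0 < B := Real.rpow_pos_of_pos hs _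
  -- derivative of K at r
  set K' : ℝ := (-P * (-(a+1)) * (r - η) ^ (-(a+1) - 1)) * r⁻¹ +
      (-P * (r - η) ^ (-(a+1))) * (-(r^2)⁻¹) with hK'
  have hKd : HasDerivAt K K' r := by
    have h1 := shiftRpowDeriv hs (-P) (-(a+1))
    have h2 : HasDerivAt (fun ρ : ℝ => ρ⁻¹) (-(r^2)⁻¹) r := hasDerivAt_inv hr0.ne'
    have := h1.mul h2
    simpa [hK, hK', mul_assoc, Pi.mul_def] using this
  have hKnorm : HasFDerivAt (fun y : EuclideanSpace ℝ (Fin N) => K ‖y‖)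
      (K' • (r⁻¹ • innerSL ℝ x)) x := by
    have h := hKd.comp_hasFDerivAt x (normFDeriv hx0)
    exact h
  -- second-derivative terms
  have hterm : ∀ i : Fin N,
      fderiv ℝ (fun y => fderiv ℝ F y (EuclideanSpace.single i 1)) x
        (EuclideanSpace.single i 1) = K' * r⁻¹ * (x i * x i) + K r := by
    intro i
    have hU : IsOpen {y : EuclideanSpace ℝ (Fin N) | η < ‖y‖} :=
      isOpen_lt continuous_const continuous_norm
    have hev : (fun y => fderiv ℝ F y (EuclideanSpace.single i 1))
        =ᶠ[nhds x] fun y => K ‖y‖ * y i := by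
      filter_upwards [hU.mem_nhds hx] with y hy
      rw [(hFderiv y hy).fderiv]
      simp [EuclideanSpace.inner_single_right]
    have hproj : HasFDerivAt (fun y : EuclideanSpace ℝ (Fin N) => y i)
        (EuclideanSpace.proj i : EuclideanSpace ℝ (Fin N) →L[ℝ] ℝ) x := by
      have h := (EuclideanSpace.proj i : EuclideanSpace ℝ (Fin N) →L[ℝ] ℝ).hasFDerivAt (x := x)
      exact h
    have hmul := hKnorm.mul hproj
    rw [hev.fderiv_eq, show (fun y : EuclideanSpace ℝ (Fin N) => K ‖y‖ * y i) = (fun y => K ‖y‖) * (fun y => y i) from rfl, hmul.fderiv]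
    simp [EuclideanSpace.inner_single_right, EuclideanSpace.single_apply]
    ring
  -- sum of squares
  have hsum : ∑ i : Fin N, x i * x i = r ^ 2 := by
    have h1 : r ^ 2 = ∑ i : Fin N, ‖x i‖ ^ 2 := by
      rw [hr, EuclideanSpace.norm_eq]
      exact Real.sq_sqrt (by positivity)
    simp only [Real.norm_eq_abs, sq_abs] at h1
    rw [h1]
    congr 1; funext i; ring
  -- Laplacian value
  have hlap : lap F x = K' * r + (N : ℝ) * K r := by
    rw [lap]
    simp only [hterm]
    rw [Finset.sum_add_distrib, Finset.sum_const, ← Finset.mul_sum, hsum]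
    simp [Finset.card_univ]
    field_simp
  -- gradient value
  have hgrad : gradient F x = (K r) • x := by
    have : HasGradientAt F ((K r) • x) x := by
      rw [hasGradientAt_iff_hasFDerivAt]
      refine (hFderiv x hx).congr_fderiv ?_
      ext v
      simp [InnerProductSpace.toDual_apply_apply, inner_smul_left, real_inner_comm]
      exact Or.inl rfl
    exact this.gradient
  have hKneg : K r < 0 := by
    have : 0 < P * A * r⁻¹ := by positivity
    rw [hK]; simp only [hA] at this ⊢; nlinarith
  have hgnorm : ‖gradient F x‖ = P * A := by
    rw [hgrad, norm_smul, Real.norm_eq_abs, abs_of_neg hKneg, hK]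
    simp only [← hA, ← hr]
    field_simp
  -- scalar identities
  have ha1 : a + 1 = (q - 1)⁻¹ := by rw [ha]; field_simp; ring
  have hPa : P = (q - 1) ^ (-(a+1)) := by
    rw [show -(a+1) = (-a) + (-1) by ring, Real.rpow_add hq1', Real.rpow_neg_one, hP, hγ, ha]
    field_simp
  have hexp : (-(a+1)) * q = -(a+2) := by
    rw [ha]; field_simp; ring
  have hpow : (P * A) ^ q = P * (a + 1) * B := by
    have h1 : (P * A) ^ q = P ^ q * A ^ q := Real.mul_rpow hP0.le hApos.le
    have h2 : P ^ q = (q - 1) ^ (-(a+2)) := by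
      rw [hPa, ← Real.rpow_mul hq1'.le, hexp]
    have h3 : A ^ q = (r - η) ^ (-(a+2)) := by
      rw [hA, ← Real.rpow_mul hs.le, hexp]
    have h4 : P * (a+1) = (q - 1) ^ (-(a+2)) := by
      rw [show -(a+2) = -(a+1) + (-1) by ring, Real.rpow_add hq1', Real.rpow_neg_one,
        ← hPa, ha1]
    rw [h1, h2, h3, h4, ← hB]
  have hKr : K r = -P * A * r⁻¹ := rfl
  have hK'2 : K' = -P * -(a+1) * B * r⁻¹ + -P * A * (-(r^2)⁻¹) := by
    rw [hK', show (-(a+1) - 1 : ℝ) = -(a+2) by ring]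
  have key : -(lap F x) + ‖gradient F x‖ ^ q = P * (((N:ℝ) - 1) / r) * A := by
    rw [hlap, hgnorm, hpow, hKr, hK'2]
    field_simp
    ring
  have hN1 : (1:ℝ) ≤ (N:ℝ) := by exact_mod_cast hN
  refine ⟨key, ?_⟩
  rw [key]
  exact mul_nonneg (mul_nonneg hP0.le (div_nonneg (by linarith) hr0.le)) hApos.le
end

section
/- Let q > 1, and let b : Ω → ℝ be a C² function and A, K, k > 0 constants such that on Ω: 0 < b ≤ A, k ≤ |∇b| ≤ 1, and |Δb| ≤ K. Set C > 0 with C^{q-1} = k^{-q}(Kπ/2 + A/(q-1)) and J(t) = C(arctan t)^{-1/(q-1)} for t > 0. Then w(x,t) = J(t)b(x) satisfies w_t - Δw + |∇w|^q ≥ 0 pointwise in Ω × (0,∞). -/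
open Real Set

lemma lap_const_mul_aux {N : ℕ} (Ω : Set (EuclideanSpace ℝ (Fin N))) (hΩ : IsOpen Ω)
    (b : EuclideanSpace ℝ (Fin N) → ℝ) (hb : ContDiffOn ℝ 2 b Ω)
    (x : EuclideanSpace ℝ (Fin N)) (hx : x ∈ Ω) (c : ℝ) :
    lap (fun y => c * b y) x = c * lap b x := by
  unfold lap
  rw [Finset.mul_sum]
  refine Finset.sum_congr rfl fun i _ => ?_
  set e := EuclideanSpace.single i (1 : ℝ) with he
  have hdb : ∀ y ∈ Ω, DifferentiableAt ℝ b y := fun y hy =>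
    (hb.contDiffAt (hΩ.mem_nhds hy)).differentiableAt two_ne_zero
  have heq : (fun y => fderiv ℝ (fun z => c * b z) y e) =ᶠ[nhds x]
      fun y => c * fderiv ℝ b y e := by
    filter_upwards [hΩ.mem_nhds hx] with y hy
    rw [fderiv_const_mul (hdb y hy) c]
    simp
  have h1 : ContDiffAt ℝ 1 (fderiv ℝ b) x :=
    (hb.contDiffAt (hΩ.mem_nhds hx)).fderiv_right (by norm_num)
  have hg : DifferentiableAt ℝ (fun y => fderiv ℝ b y e) x :=
    (h1.differentiableAt one_ne_zero).clm_apply (differentiableAt_const e)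
  rw [heq.fderiv_eq, fderiv_const_mul hg c]
  simp

lemma grad_const_mul_aux {N : ℕ} (Ω : Set (EuclideanSpace ℝ (Fin N))) (hΩ : IsOpen Ω)
    (b : EuclideanSpace ℝ (Fin N) → ℝ) (hb : ContDiffOn ℝ 2 b Ω)
    (x : EuclideanSpace ℝ (Fin N)) (hx : x ∈ Ω) (c : ℝ) :
    gradient (fun y => c * b y) x = c • gradient b x := by
  have hdb : DifferentiableAt ℝ b x :=
    (hb.contDiffAt (hΩ.mem_nhds hx)).differentiableAt two_ne_zero
  have h := hdb.hasGradientAt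
  have h2 := h.hasFDerivAt
  have h3 := h2.const_mul c
  have h4 : HasGradientAt (fun y => c * b y) (c • gradient b x) x := by
    rw [hasGradientAt_iff_hasFDerivAt]
    simpa using h3
  exact h4.gradient

set_option maxHeartbeats 1000000 in
/-- with `0 < b ≤ A`, `k ≤ |∇b| ≤ 1`, `|Δb| ≤ K` on `Ω`,
`C^{q-1} = k^{-q}(Kπ/2 + A/(q-1))` and `J(t) = C (arctan t)^{-1/(q-1)}`, the function
`w(x,t) = J(t) b(x)` is a supersolution: `w_t - Δw + |∇w|^q ≥ 0` on `Ω × (0,∞)`. -/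
theorem stmt11 (N : ℕ) (q : ℝ) (hq : 1 < q)
    (Ω : Set (EuclideanSpace ℝ (Fin N))) (hΩ : IsOpen Ω)
    (b : EuclideanSpace ℝ (Fin N) → ℝ) (hb : ContDiffOn ℝ 2 b Ω)
    (A K k C : ℝ) (hA : 0 < A) (hK : 0 < K) (hk : 0 < k)
    (hb1 : ∀ x ∈ Ω, 0 < b x ∧ b x ≤ A)
    (hb2 : ∀ x ∈ Ω, k ≤ ‖gradient b x‖ ∧ ‖gradient b x‖ ≤ 1)
    (hb3 : ∀ x ∈ Ω, |lap b x| ≤ K)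
    (hC : 0 < C) (hCq : C ^ (q - 1) = k ^ (-q) * (K * π / 2 + A / (q - 1))) :
    ∀ x ∈ Ω, ∀ t : ℝ, 0 < t →
      deriv (fun s => C * Real.arctan s ^ (-1 / (q - 1)) * b x) t
          - lap (fun y => C * Real.arctan t ^ (-1 / (q - 1)) * b y) x
          + ‖gradient (fun y => C * Real.arctan t ^ (-1 / (q - 1)) * b y) x‖ ^ q
        ≥ 0 := by
  intro x hx t ht
  set p : ℝ := -1 / (q - 1) with hp
  have hq1 : 0 < q - 1 := by linarith
  set a : ℝ := Real.arctan t with haa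
  have ha0 : 0 < a := by have h := Real.arctan_strictMono ht; rw [Real.arctan_zero] at h; exact h
  have haπ : a < π / 2 := Real.arctan_lt_pi_div_two t
  set c : ℝ := C * a ^ p with hcc
  have hap : (0:ℝ) < a ^ p := Real.rpow_pos_of_pos ha0 p
  have hc0 : 0 < c := mul_pos hC hap
  -- time derivative
  have hJ : HasDerivAt (fun s => C * Real.arctan s ^ p * b x)
      (C * (1 / (1 + t ^ 2) * p * a ^ (p - 1)) * b x) t := by
    have h1 : HasDerivAt (fun s => Real.arctan s ^ p)
        (1 / (1 + t ^ 2) * p * a ^ (p - 1)) t :=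
      (Real.hasDerivAt_arctan t).rpow_const (Or.inl (ne_of_gt ha0))
    exact (h1.const_mul C).mul_const (b x)
  rw [hJ.deriv]
  -- laplacian and gradient
  rw [lap_const_mul_aux Ω hΩ b hb x hx c, grad_const_mul_aux Ω hΩ b hb x hx c]
  rw [norm_smul, Real.norm_eq_abs, abs_of_pos hc0]
  set g : ℝ := ‖gradient b x‖ with hg
  have hkg : k ≤ g := (hb2 x hx).1
  have hg0 : 0 ≤ g := le_trans hk.le hkg
  have hbx := hb1 x hx
  have hlap : |lap b x| ≤ K := hb3 x hx
  -- third term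
  have hpq : p * q = p - 1 := by rw [hp, div_mul_eq_mul_div, div_sub_one hq1.ne']; congr 1; ring
  have h3 : (c * g) ^ q = C ^ q * a ^ (p - 1) * g ^ q := by
    rw [Real.mul_rpow hc0.le hg0, hcc, Real.mul_rpow hC.le hap.le,
      ← Real.rpow_mul ha0.le, hpq]
  rw [h3]
  set D : ℝ := C * a ^ (p - 1) with hD
  have hD0 : 0 < D := mul_pos hC (Real.rpow_pos_of_pos ha0 _)
  -- key algebraic identity
  have hkq : (0:ℝ) < k ^ q := Real.rpow_pos_of_pos hk q
  have hkk : k ^ (-q) * k ^ q = 1 := by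
    rw [← Real.rpow_add hk]; simp
  have key : C ^ (q - 1) * k ^ q = K * π / 2 + A / (q - 1) := by
    rw [hCq, mul_comm (k ^ (-q)) _, mul_assoc, hkk, mul_one]
  -- bound term 3
  have hgq : k ^ q ≤ g ^ q := Real.rpow_le_rpow hk.le hkg (by linarith)
  have hCq' : C ^ q = C * C ^ (q - 1) := by
    have : C ^ q = C ^ (1 + (q - 1)) := by norm_num
    rw [this, Real.rpow_add hC, Real.rpow_one]
  have h3b : C ^ q * a ^ (p - 1) * g ^ q ≥ D * (C ^ (q - 1) * k ^ q) := by
    rw [hCq', hD]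
    have h := mul_le_mul_of_nonneg_left hgq
      (by positivity : (0:ℝ) ≤ C * C ^ (q - 1) * a ^ (p - 1))
    nlinarith [h]
  -- bound term 2
  have hca : c = D * a := by
    rw [hcc, hD, mul_assoc, ← Real.rpow_add_one ha0.ne' (p - 1)]
    ring_nf
  have h2b : c * lap b x ≤ D * (K * π / 2) := by
    have h1 : lap b x ≤ K := (abs_le.mp hlap).2
    calc c * lap b x ≤ c * K := mul_le_mul_of_nonneg_left h1 hc0.le
      _ = D * a * K := by rw [hca]
      _ ≤ D * (π / 2) * K := by
          have h2 := mul_le_mul_of_nonneg_right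
            (mul_le_mul_of_nonneg_left haπ.le hD0.le) hK.le
          linarith
      _ = D * (K * π / 2) := by ring
  -- bound term 1
  have h1b : C * (1 / (1 + t ^ 2) * p * a ^ (p - 1)) * b x ≥ -(D * (A / (q - 1))) := by
    have ht2 : (0:ℝ) < 1 + t ^ 2 := by positivity
    have hfrac : 1 / (1 + t ^ 2) ≤ 1 := by
      rw [div_le_one ht2]; nlinarith
    have hfrac0 : 0 < 1 / (1 + t ^ 2) := by positivity
    have hpneg : p = -(1 / (q - 1)) := by rw [hp]; ring
    have hD' : C * (1 / (1 + t ^ 2) * p * a ^ (p - 1)) * b x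
        = -(D * (1 / (1 + t ^ 2)) * (1 / (q - 1)) * b x) := by
      rw [hD, hpneg]; ring
    rw [hD']
    have hb0 : 0 < b x := hbx.1
    have hbA : b x ≤ A := hbx.2
    have h1 : D * (1 / (1 + t ^ 2)) * (1 / (q - 1)) * b x
        ≤ D * (1 / (q - 1)) * A := by
      calc D * (1 / (1 + t ^ 2)) * (1 / (q - 1)) * b x
          ≤ D * (1 / (1 + t ^ 2)) * (1 / (q - 1)) * A :=
            mul_le_mul_of_nonneg_left hbA (by positivity)
        _ = (1 / (1 + t ^ 2)) * (D * (1 / (q - 1)) * A) := by ring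
        _ ≤ 1 * (D * (1 / (q - 1)) * A) :=
            mul_le_mul_of_nonneg_right hfrac (by positivity)
        _ = D * (1 / (q - 1)) * A := by ring
    have e2 : D * (1 / (q - 1)) * A = D * (A / (q - 1)) := by ring
    linarith [h1, e2.ge]
  -- combine
  have final : D * (C ^ (q - 1) * k ^ q) - D * (K * π / 2) - D * (A / (q - 1)) = 0 := by
    rw [key]; ring
  linarith [h3b, h2b, h1b]
end
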